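/- Let 0 < m < M < 1, let t₁ > 0 be the unique solution of 8 · Σ_{k=0}^∞ (1 − e^{−(2k+1)²π² t₁})/((2k+1)²π²) = M. Then there exists a unique t₂ > t₁ such that 8 · Σ_{k=0}^∞ e^{−(2k+1)²π² t₂}(e^{(2k+1)²π² t₁} − 1)/((2k+1)²π²) = m. -/

import Mathlib

/-- The total mass `μ(t) = 8 ∑_{k=0}^∞ (1 - e^{-(2k+1)²π² t}) / ((2k+1)²π²)` of the
solution of the heat equation with zero initial data and unit boundary values. -/
noncomputable def totalMass (t : ℝ) : ℝ :=
  8 * ∑' k : ℕ, (1 - Real.exp (-((2 * (k : ℝ) + 1) ^ 2 * Real.pi ^ 2) * t)) /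
    ((2 * (k : ℝ) + 1) ^ 2 * Real.pi ^ 2)

/-- The total mass after the boundary value is switched off at time `t₁`. -/
noncomputable def decayMass (t₁ t : ℝ) : ℝ :=
  8 * ∑' k : ℕ,
    Real.exp (-((2 * (k : ℝ) + 1) ^ 2 * Real.pi ^ 2) * t) *
      (Real.exp (((2 * (k : ℝ) + 1) ^ 2 * Real.pi ^ 2) * t₁) - 1) /
    ((2 * (k : ℝ) + 1) ^ 2 * Real.pi ^ 2)

open Real

private noncomputable def lam (k : ℕ) : ℝ := (2 * (k : ℝ) + 1) ^ 2 * Real.pi ^ 2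

private lemma lam_pos (k : ℕ) : 0 < lam k := by
  have : (0:ℝ) < 2 * (k:ℝ) + 1 := by positivity
  have := Real.pi_pos
  unfold lam; positivity

private lemma one_le_pi_sq : (1:ℝ) ≤ Real.pi ^ 2 := by
  nlinarith [Real.pi_gt_three]

private lemma lam_ge (k : ℕ) : ((k:ℝ)+1)^2 ≤ lam k := by
  have hk : (0:ℝ) ≤ (k:ℝ) := Nat.cast_nonneg k
  have h1 : ((k:ℝ)+1)^2 ≤ (2*(k:ℝ)+1)^2 := by nlinarith
  calc ((k:ℝ)+1)^2 = ((k:ℝ)+1)^2 * 1 := by ring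
    _ ≤ (2*(k:ℝ)+1)^2 * Real.pi^2 := mul_le_mul h1 one_le_pi_sq zero_le_one (by positivity)

private lemma pi_sq_le_lam (k : ℕ) : Real.pi ^ 2 ≤ lam k := by
  have hk : (0:ℝ) ≤ (k:ℝ) := Nat.cast_nonneg k
  have h1 : (1:ℝ) ≤ (2*(k:ℝ)+1)^2 := by nlinarith
  calc Real.pi^2 = 1 * Real.pi^2 := by ring
    _ ≤ (2*(k:ℝ)+1)^2 * Real.pi^2 := mul_le_mul_of_nonneg_right h1 (sq_nonneg _)

private lemma summable_aux {f : ℕ → ℝ} (h0 : ∀ k, 0 ≤ f k) (h1 : ∀ k, f k ≤ 1 / lam k) :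
    Summable f := by
  have hb : Summable (fun n : ℕ => 1/((n:ℝ)+1)^2) := by
    have h := (summable_nat_add_iff (f := fun n : ℕ => 1/(n:ℝ)^2) 1).mpr
      (Real.summable_one_div_nat_pow.mpr one_lt_two)
    simpa using h
  refine Summable.of_nonneg_of_le h0 (fun k => (h1 k).trans ?_) hb
  exact one_div_le_one_div_of_le (by positivity) (lam_ge k)

/-- decay term -/
private noncomputable def dterm (t₁ t : ℝ) (k : ℕ) : ℝ :=
  Real.exp (-(lam k) * t) * (Real.exp ((lam k) * t₁) - 1) / lam k

private lemma one_le_exp_lam (t₁ : ℝ) (ht₁ : 0 ≤ t₁) (k : ℕ) :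
    (1:ℝ) ≤ Real.exp (lam k * t₁) := by
  rw [show (1:ℝ) = Real.exp 0 by simp]
  exact Real.exp_le_exp.2 (mul_nonneg (lam_pos k).le ht₁)

private lemma dterm_nonneg (t₁ t : ℝ) (ht₁ : 0 ≤ t₁) (k : ℕ) : 0 ≤ dterm t₁ t k := by
  have h1 := one_le_exp_lam t₁ ht₁ k
  exact div_nonneg (mul_nonneg (Real.exp_pos _).le (by linarith)) (lam_pos k).le

private lemma dterm_eq (t₁ t : ℝ) (k : ℕ) :
    dterm t₁ t k = (Real.exp (lam k * (t₁ - t)) - Real.exp (-(lam k) * t)) / lam k := by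
  unfold dterm
  rw [mul_sub, mul_one, ← Real.exp_add]
  ring_nf

private lemma dterm_le (t₁ t : ℝ) (ht : t₁ ≤ t) (k : ℕ) : dterm t₁ t k ≤ 1 / lam k := by
  rw [dterm_eq]
  have h1 : Real.exp (lam k * (t₁ - t)) ≤ 1 := by
    rw [show (1:ℝ) = Real.exp 0 by simp]
    exact Real.exp_le_exp.2 (mul_nonpos_of_nonneg_of_nonpos (lam_pos k).le (by linarith))
  have h2 : 0 < Real.exp (-(lam k) * t) := Real.exp_pos _
  exact (div_le_div_iff_of_pos_right (lam_pos k)).2 (by linarith)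

private lemma summable_dterm (t₁ t : ℝ) (ht₁ : 0 ≤ t₁) (ht : t₁ ≤ t) :
    Summable (dterm t₁ t) :=
  summable_aux (dterm_nonneg t₁ t ht₁) (dterm_le t₁ t ht)

/-- total mass term -/
private noncomputable def mterm (t : ℝ) (k : ℕ) : ℝ :=
  (1 - Real.exp (-(lam k) * t)) / lam k

private lemma mterm_nonneg (t : ℝ) (ht : 0 ≤ t) (k : ℕ) : 0 ≤ mterm t k := by
  have h1 : Real.exp (-(lam k) * t) ≤ 1 := by
    rw [show (1:ℝ) = Real.exp 0 by simp]
    exact Real.exp_le_exp.2 (mul_nonpos_of_nonpos_of_nonneg (neg_nonpos.2 (lam_pos k).le) ht)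
  exact div_nonneg (by linarith) (lam_pos k).le

private lemma mterm_le (t : ℝ) (k : ℕ) : mterm t k ≤ 1 / lam k := by
  have h2 : 0 < Real.exp (-(lam k) * t) := Real.exp_pos _
  exact (div_le_div_iff_of_pos_right (lam_pos k)).2 (by linarith)

private lemma summable_mterm (t : ℝ) (ht : 0 ≤ t) : Summable (mterm t) :=
  summable_aux (mterm_nonneg t ht) (mterm_le t)

private lemma decayMass_eq (t₁ t : ℝ) : decayMass t₁ t = 8 * ∑' k, dterm t₁ t k := rfl

private lemma totalMass_eq (t : ℝ) : totalMass t = 8 * ∑' k, mterm t k := rfl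

private lemma dterm_factor (t₁ t : ℝ) (k : ℕ) :
    dterm t₁ t k = Real.exp (-(lam k) * (t - t₁)) * mterm t₁ k := by
  have h : Real.exp (-(lam k)*t) * (Real.exp (lam k * t₁) - 1)
      = Real.exp (-(lam k)*(t-t₁)) * (1 - Real.exp (-(lam k)*t₁)) := by
    rw [mul_sub, mul_one, ← Real.exp_add, mul_sub, mul_one, ← Real.exp_add]
    ring_nf
  unfold dterm mterm
  rw [h, mul_div_assoc]

private lemma decayMass_switch (t₁ : ℝ) : decayMass t₁ t₁ = totalMass t₁ := by
  rw [decayMass_eq, totalMass_eq]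
  congr 1
  refine tsum_congr fun k => ?_
  unfold dterm mterm
  rw [mul_sub, mul_one, ← Real.exp_add]
  simp only [neg_mul, neg_add_cancel, Real.exp_zero]

private lemma dterm_strictAnti (t₁ : ℝ) (ht₁ : 0 < t₁) {s t : ℝ} (hst : s < t) (k : ℕ) :
    dterm t₁ t k < dterm t₁ s k := by
  have hpos : 0 < Real.exp (lam k * t₁) - 1 := by
    have : (0:ℝ) < lam k * t₁ := mul_pos (lam_pos k) ht₁
    have := Real.exp_lt_exp.2 this
    simp only [Real.exp_zero] at this
    linarith
  have hexp : Real.exp (-(lam k) * t) < Real.exp (-(lam k) * s) := by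
    apply Real.exp_lt_exp.2
    have := lam_pos k
    nlinarith
  unfold dterm
  exact (div_lt_div_iff_of_pos_right (lam_pos k)).2 (mul_lt_mul_of_pos_right hexp hpos)

private lemma decayMass_continuousOn (t₁ : ℝ) (ht₁ : 0 < t₁) :
    ContinuousOn (fun t => decayMass t₁ t) (Set.Ici t₁) := by
  have key : Continuous (fun x : Set.Ici t₁ => ∑' k, dterm t₁ (x : ℝ) k) := by
    refine continuous_tsum (u := fun k : ℕ => 1/((k:ℝ)+1)^2)
      (f := fun k (x : Set.Ici t₁) => dterm t₁ (x : ℝ) k) (fun k => ?_) ?_ ?_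
    · unfold dterm
      fun_prop
    · have h := (summable_nat_add_iff (f := fun n : ℕ => 1/(n:ℝ)^2) 1).mpr
        (Real.summable_one_div_nat_pow.mpr one_lt_two)
      simpa using h
    · intro k x
      rw [Real.norm_eq_abs, abs_of_nonneg (dterm_nonneg t₁ x ht₁.le k)]
      exact (dterm_le t₁ x x.2 k).trans
        (one_div_le_one_div_of_le (by positivity) (lam_ge k))
  have : ContinuousOn (fun t => ∑' k, dterm t₁ t k) (Set.Ici t₁) :=
    continuousOn_iff_continuous_restrict.mpr key
  exact continuousOn_const.mul this

private lemma decayMass_bound (t₁ t : ℝ) (ht₁ : 0 < t₁) (ht : t₁ ≤ t) :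
    decayMass t₁ t ≤ Real.exp (-Real.pi^2 * (t - t₁)) * totalMass t₁ := by
  have hsum1 : Summable (dterm t₁ t) := summable_dterm t₁ t ht₁.le ht
  have hsum2 : Summable (mterm t₁) := summable_mterm t₁ ht₁.le
  have hle : ∀ k, dterm t₁ t k ≤ Real.exp (-Real.pi^2 * (t - t₁)) * mterm t₁ k := by
    intro k
    rw [dterm_factor]
    refine mul_le_mul_of_nonneg_right ?_ (mterm_nonneg t₁ ht₁.le k)
    apply Real.exp_le_exp.2
    have h1 := pi_sq_le_lam k
    nlinarith [sub_nonneg.2 ht]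
  calc decayMass t₁ t = 8 * ∑' k, dterm t₁ t k := decayMass_eq t₁ t
    _ ≤ 8 * ∑' k, Real.exp (-Real.pi^2 * (t - t₁)) * mterm t₁ k := by
        have := Summable.tsum_le_tsum hle hsum1 (hsum2.mul_left _)
        linarith
    _ = Real.exp (-Real.pi^2 * (t - t₁)) * (8 * ∑' k, mterm t₁ k) := by
        rw [tsum_mul_left]; ring
    _ = Real.exp (-Real.pi^2 * (t - t₁)) * totalMass t₁ := by rw [totalMass_eq]

/-- Given `0 < m < M < 1` and the first switching time `t₁ > 0` with `μ(t₁) = M`, there is a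
unique second switching time `t₂ > t₁` at which the decaying mass equals `m`. -/
theorem exists_unique_second_switch (m M t₁ : ℝ)
    (hm : 0 < m) (hmM : m < M) (hM : M < 1)
    (ht₁ : 0 < t₁) (hswitch : totalMass t₁ = M) :
    ∃! t₂ : ℝ, t₁ < t₂ ∧ decayMass t₁ t₂ = m := by
  have hπ : (0:ℝ) < Real.pi ^ 2 := by positivity
  set D : ℝ → ℝ := fun t => decayMass t₁ t with hD
  -- strict antitonicity on Ici t₁
  have hanti : StrictAntiOn D (Set.Ici t₁) := by
    intro s hs t ht hst
    rw [hD]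
    simp only [decayMass_eq]
    have hlt := Summable.tsum_lt_tsum (i := 0) (fun k => (dterm_strictAnti t₁ ht₁ hst k).le)
      (dterm_strictAnti t₁ ht₁ hst 0)
      (summable_dterm t₁ t ht₁.le (le_trans hs hst.le))
      (summable_dterm t₁ s ht₁.le hs)
    linarith
  have hDt₁ : D t₁ = M := by rw [hD]; simp only; rw [decayMass_switch, hswitch]
  -- choose T
  set T : ℝ := t₁ + Real.log (M / m) / Real.pi ^ 2 + 1 with hT
  have hlog : 0 < Real.log (M / m) := Real.log_pos (by rw [lt_div_iff₀ hm]; linarith)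
  have ht₁T : t₁ < T := by rw [hT]; have := div_pos hlog hπ; linarith
  have hDT : D T < m := by
    have hb := decayMass_bound t₁ T ht₁ ht₁T.le
    have harg : -Real.pi^2 * (T - t₁) = -Real.log (M / m) + -Real.pi^2 := by
      rw [hT]; field_simp; ring
    have hMm : (0:ℝ) < M / m := div_pos (by linarith) hm
    have hexp : Real.exp (-Real.pi^2 * (T - t₁)) = (m / M) * Real.exp (-Real.pi^2) := by
      rw [harg, Real.exp_add, Real.exp_neg, Real.exp_log hMm, inv_div]
    have he1 : Real.exp (-Real.pi^2) < 1 := Real.exp_lt_one_iff.2 (by linarith)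
    have hM0 : (0:ℝ) < M := by linarith
    have : D T ≤ m * Real.exp (-Real.pi^2) := by
      have : (m / M) * Real.exp (-Real.pi^2) * M = m * Real.exp (-Real.pi^2) := by
        field_simp
      rw [hD]; simp only
      calc decayMass t₁ T ≤ Real.exp (-Real.pi^2 * (T - t₁)) * totalMass t₁ := hb
        _ = m * Real.exp (-Real.pi^2) := by rw [hexp, hswitch, this]
    nlinarith [Real.exp_pos (-Real.pi^2)]
  -- existence via IVT
  have hcont : ContinuousOn D (Set.Icc t₁ T) :=
    (decayMass_continuousOn t₁ ht₁).mono Set.Icc_subset_Ici_self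
  have hmem : m ∈ Set.Icc (D T) (D t₁) := ⟨hDT.le, by rw [hDt₁]; exact hmM.le⟩
  obtain ⟨t₂, ht₂mem, ht₂⟩ := intermediate_value_Icc' ht₁T.le hcont hmem
  have hne : t₂ ≠ t₁ := by
    intro h
    rw [h, hDt₁] at ht₂
    linarith
  have hlt : t₁ < t₂ := lt_of_le_of_ne ht₂mem.1 (Ne.symm hne)
  refine ⟨t₂, ⟨hlt, ht₂⟩, ?_⟩
  rintro y ⟨hy1, hy2⟩
  exact hanti.injOn (Set.mem_Ici.2 hy1.le) (Set.mem_Ici.2 hlt.le)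
    ((show D y = m from hy2).trans ht₂.symm)
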